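/- Let f : Ω → ℂ be a nonvanishing scalar C² function on an open set Ω ⊆ ℝ³ and set q = Δf/f. If W = W₀ + 𝐖 : Ω → ℍ(ℂ) is a C² solution of the main Vekua equation DW − (Df/f)·C_H W = 0, then: (i) the scalar part W₀ satisfies (−Δ + q)W₀ = 0; (ii) φ₀ = W₀/f satisfies div(f²∇φ₀) = 0; (iii) the vector field 𝚽 = f𝐖 satisfies div 𝚽 = 0; and (iv) 𝚽 satisfies rot(f⁻² rot 𝚽) = 0. -/

import Mathlib

open Quaternion

noncomputable section

/-- Points of ℝ³. -/
abbrev P3 := EuclideanSpace ℝ (Fin 3)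

/-- Partial derivative ∂ₖ of a complex-valued function on ℝ³. -/
def pd (k : Fin 3) (F : P3 → ℂ) : P3 → ℂ :=
  fun p => fderiv ℝ F p (EuclideanSpace.single k 1)

/-- The Laplacian Δ = ∂₁² + ∂₂² + ∂₃². -/
def lap3 (F : P3 → ℂ) : P3 → ℂ := fun p => ∑ k : Fin 3, pd k (pd k F) p

/-- Embedding of a complex scalar as a quaternion. -/
def qC (z : ℂ) : ℍ[ℂ] := ⟨z, 0, 0, 0⟩

/-- The quaternionic imaginary units e₁, e₂, e₃. -/
def qe : Fin 3 → ℍ[ℂ] := ![⟨0,1,0,0⟩, ⟨0,0,1,0⟩, ⟨0,0,0,1⟩]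

/-- The eₖ-components of a quaternion. -/
def qcomp : Fin 3 → ℍ[ℂ] → ℂ := ![QuaternionAlgebra.imI, QuaternionAlgebra.imJ, QuaternionAlgebra.imK]

/-- Quaternionic conjugation C_H. -/
def CH (q : ℍ[ℂ]) : ℍ[ℂ] := ⟨q.re, -q.imI, -q.imJ, -q.imK⟩

/-- Componentwise partial derivative of a quaternion-valued function. -/
def pdq (k : Fin 3) (W : P3 → ℍ[ℂ]) : P3 → ℍ[ℂ] :=
  fun p => ⟨pd k (fun x => (W x).re) p, pd k (fun x => (W x).imI) p,
            pd k (fun x => (W x).imJ) p, pd k (fun x => (W x).imK) p⟩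

/-- The Dirac (Moisil–Theodorescu) operator D Q = Σₖ eₖ ∂ₖ Q. -/
def Dq (W : P3 → ℍ[ℂ]) : P3 → ℍ[ℂ] := fun p => ∑ k : Fin 3, qe k * pdq k W p

/-- The right Dirac operator Dᵣ Q = Σₖ (∂ₖ Q) eₖ. -/
def Drq (W : P3 → ℍ[ℂ]) : P3 → ℍ[ℂ] := fun p => ∑ k : Fin 3, pdq k W p * qe k

/-- Gradient of a scalar function viewed as a purely vectorial quaternion. -/
def gradq (F : P3 → ℂ) : P3 → ℍ[ℂ] := fun p => ⟨0, pd 0 F p, pd 1 F p, pd 2 F p⟩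

/-- Divergence of (the vector part of) a quaternion-valued function. -/
def divq (W : P3 → ℍ[ℂ]) : P3 → ℂ :=
  fun p => pd 0 (fun x => (W x).imI) p + pd 1 (fun x => (W x).imJ) p + pd 2 (fun x => (W x).imK) p

/-- Rotor (curl) of (the vector part of) a quaternion-valued function. -/
def rotq (W : P3 → ℍ[ℂ]) : P3 → ℍ[ℂ] :=
  fun p => ⟨0,
    pd 1 (fun x => (W x).imK) p - pd 2 (fun x => (W x).imJ) p,
    pd 2 (fun x => (W x).imI) p - pd 0 (fun x => (W x).imK) p,
    pd 0 (fun x => (W x).imJ) p - pd 1 (fun x => (W x).imI) p⟩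

/-- Cross product of the vector parts of two quaternions. -/
def crossq (u v : ℍ[ℂ]) : ℍ[ℂ] :=
  ⟨0, u.imJ * v.imK - u.imK * v.imJ, u.imK * v.imI - u.imI * v.imK, u.imI * v.imJ - u.imJ * v.imI⟩

/-- Bilinear scalar product of the vector parts of two quaternions. -/
def dotq (u v : ℍ[ℂ]) : ℂ := u.imI * v.imI + u.imJ * v.imJ + u.imK * v.imK

/-- `Cⁿ` smoothness of a quaternion-valued function on a set, componentwise. -/
def QContDiffOn (n : ℕ) (W : P3 → ℍ[ℂ]) (Ω : Set P3) : Prop :=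
  ContDiffOn ℝ n (fun p => (W p).re) Ω ∧ ContDiffOn ℝ n (fun p => (W p).imI) Ω ∧
  ContDiffOn ℝ n (fun p => (W p).imJ) Ω ∧ ContDiffOn ℝ n (fun p => (W p).imK) Ω

/-- The pure-quaternion Df/f built from a nonvanishing scalar function f. -/
def DfF (f : P3 → ℂ) : P3 → ℍ[ℂ] := fun p => (f p)⁻¹ • gradq f p

/- ============ auxiliary lemmas ============ -/

lemma pd_congr {Ω : Set P3} (hΩ : IsOpen Ω) {F G : P3 → ℂ} (h : ∀ x ∈ Ω, F x = G x)
    {p : P3} (hp : p ∈ Ω) (k : Fin 3) : pd k F p = pd k G p := by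
  unfold pd
  rw [Filter.EventuallyEq.fderiv_eq (Filter.eventuallyEq_of_mem (hΩ.mem_nhds hp) h)]

lemma pd_mul {F G : P3 → ℂ} {p : P3} (hF : DifferentiableAt ℝ F p)
    (hG : DifferentiableAt ℝ G p) (k : Fin 3) :
    pd k (fun x => F x * G x) p = F p * pd k G p + pd k F p * G p := by
  unfold pd; rw [fderiv_fun_mul hF hG]; simp [smul_eq_mul]; ring

lemma pd_sub {F G : P3 → ℂ} {p : P3} (hF : DifferentiableAt ℝ F p)
    (hG : DifferentiableAt ℝ G p) (k : Fin 3) :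
    pd k (fun x => F x - G x) p = pd k F p - pd k G p := by
  unfold pd; rw [fderiv_fun_sub hF hG]; simp

lemma pd_neg {F : P3 → ℂ} {p : P3} (k : Fin 3) :
    pd k (fun x => -F x) p = -pd k F p := by
  unfold pd; rw [fderiv_fun_neg]; simp

lemma pd_inv {G : P3 → ℂ} {p : P3} (hG : DifferentiableAt ℝ G p) (hG0 : G p ≠ 0) (k : Fin 3) :
    pd k (fun x => (G x)⁻¹) p = -(pd k G p) / (G p)^2 := by
  have h := (hasFDerivAt_inv' (𝕜 := ℝ) hG0).comp p hG.hasFDerivAt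
  have h2 : HasFDerivAt (fun x => (G x)⁻¹) _ p := h
  unfold pd; rw [h2.fderiv]
  simp only [ContinuousLinearMap.comp_apply, ContinuousLinearMap.neg_apply,
    ContinuousLinearMap.mulLeftRight_apply]
  rw [neg_div, div_eq_mul_inv, sq, mul_inv]; ring

lemma pd_div {F G : P3 → ℂ} {p : P3} (hF : DifferentiableAt ℝ F p)
    (hG : DifferentiableAt ℝ G p) (hG0 : G p ≠ 0) (k : Fin 3) :
    pd k (fun x => F x / G x) p = (pd k F p * G p - F p * pd k G p) / (G p)^2 := by
  have hGi : DifferentiableAt ℝ (fun x => (G x)⁻¹) p :=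
    (differentiableAt_inv hG0).comp p hG
  have : (fun x => F x / G x) = fun x => F x * (G x)⁻¹ := by funext x; rw [div_eq_mul_inv]
  rw [this, pd_mul hF hGi, pd_inv hG hG0]
  field_simp; ring

lemma pd_diffAt {Ω : Set P3} (hΩ : IsOpen Ω) {u : P3 → ℂ} (hu : ContDiffOn ℝ 2 u Ω)
    {p : P3} (hp : p ∈ Ω) (k : Fin 3) : DifferentiableAt ℝ (pd k u) p := by
  have hd : DifferentiableAt ℝ (fderiv ℝ u) p :=
    ((hu.contDiffAt (hΩ.mem_nhds hp)).fderiv_right (m := 1) le_rfl).differentiableAt one_ne_zero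
  exact ((ContinuousLinearMap.apply ℝ ℂ (EuclideanSpace.single k 1)).differentiableAt).comp p hd

lemma pd_comm {Ω : Set P3} (hΩ : IsOpen Ω) {u : P3 → ℂ} (hu : ContDiffOn ℝ 2 u Ω)
    {p : P3} (hp : p ∈ Ω) (j k : Fin 3) : pd j (pd k u) p = pd k (pd j u) p := by
  have hat : ContDiffAt ℝ 2 u p := hu.contDiffAt (hΩ.mem_nhds hp)
  have hsym := hat.isSymmSndFDerivAt (by norm_num)
  have hd : DifferentiableAt ℝ (fderiv ℝ u) p :=
    (hat.fderiv_right (m := 1) le_rfl).differentiableAt one_ne_zero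
  have key : ∀ v w : P3,
      fderiv ℝ (fun x => fderiv ℝ u x w) p v = fderiv ℝ (fderiv ℝ u) p v w := by
    intro v w
    have h2 : HasFDerivAt (fun x => fderiv ℝ u x w)
        ((ContinuousLinearMap.apply ℝ ℂ w).comp (fderiv ℝ (fderiv ℝ u) p)) p :=
      (ContinuousLinearMap.apply ℝ ℂ w).hasFDerivAt.comp p hd.hasFDerivAt
    rw [h2.fderiv]; rfl
  show fderiv ℝ (fun x => fderiv ℝ u x _) p _ = fderiv ℝ (fun x => fderiv ℝ u x _) p _
  rw [key, key]
  exact hsym _ _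

/-- if W = W₀ + 𝐖 solves the main Vekua equation, then
    (i) (−Δ+q)W₀ = 0 with q = Δf/f; (ii) div(f²∇(W₀/f)) = 0;
    (iii) div(f𝐖) = 0; (iv) rot(f⁻² rot(f𝐖)) = 0. -/
theorem statement6 (Ω : Set P3) (hΩ : IsOpen Ω)
    (f : P3 → ℂ) (hf : ContDiffOn ℝ 2 f Ω) (hf0 : ∀ p ∈ Ω, f p ≠ 0)
    (W : P3 → ℍ[ℂ]) (hW : QContDiffOn 2 W Ω)
    (hVek : ∀ p ∈ Ω, Dq W p - DfF f p * CH (W p) = 0) :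
    ∀ p ∈ Ω,
      (-(lap3 (fun x => (W x).re) p) + (lap3 f p / f p) * (W p).re = 0) ∧
      (∑ k : Fin 3, pd k (fun x => (f x) ^ 2 * pd k (fun y => (W y).re / f y) x) p = 0) ∧
      (divq (fun x => f x • Quaternion.im (W x)) p = 0) ∧
      (rotq (fun x => ((f x) ^ 2)⁻¹ • rotq (fun y => f y • Quaternion.im (W y)) x) p = 0) := by
  obtain ⟨hw0, hw1, hw2, hw3⟩ := hW
  intro p hp
  -- differentiability helpers
  have hdf : ∀ x ∈ Ω, DifferentiableAt ℝ f x := fun x hx =>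
    (hf.contDiffAt (hΩ.mem_nhds hx)).differentiableAt two_ne_zero
  have hdw0 : ∀ x ∈ Ω, DifferentiableAt ℝ (fun y => (W y).re) x := fun x hx =>
    (hw0.contDiffAt (hΩ.mem_nhds hx)).differentiableAt two_ne_zero
  have hdw1 : ∀ x ∈ Ω, DifferentiableAt ℝ (fun y => (W y).imI) x := fun x hx =>
    (hw1.contDiffAt (hΩ.mem_nhds hx)).differentiableAt two_ne_zero
  have hdw2 : ∀ x ∈ Ω, DifferentiableAt ℝ (fun y => (W y).imJ) x := fun x hx =>
    (hw2.contDiffAt (hΩ.mem_nhds hx)).differentiableAt two_ne_zero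
  have hdw3 : ∀ x ∈ Ω, DifferentiableAt ℝ (fun y => (W y).imK) x := fun x hx =>
    (hw3.contDiffAt (hΩ.mem_nhds hx)).differentiableAt two_ne_zero
  -- Vekua equation components, multiplied by f
  have hS : ∀ x ∈ Ω,
      f x * pd 0 (fun y => (W y).imI) x + f x * pd 1 (fun y => (W y).imJ) x
        + f x * pd 2 (fun y => (W y).imK) x
        + (pd 0 f x * (W x).imI + pd 1 f x * (W x).imJ + pd 2 f x * (W x).imK) = 0 := by
    intro x hx
    have h0 := congrArg QuaternionAlgebra.re (hVek x hx)
    simp [Dq, DfF, Fin.sum_univ_three, Quaternion.re_mul, Quaternion.imI_mul, Quaternion.imJ_mul,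
      Quaternion.imK_mul] at h0
    simp [Dq, pdq, qe, DfF, gradq, CH, Fin.sum_univ_three, smul_eq_mul] at h0
    have hinv : f x * (f x)⁻¹ = 1 := mul_inv_cancel₀ (hf0 x hx)
    linear_combination (-(f x)) * h0 - (pd 0 f x * (W x).imI + pd 1 f x * (W x).imJ
      + pd 2 f x * (W x).imK) * hinv
  have hI : ∀ x ∈ Ω,
      f x * pd 0 (fun y => (W y).re) x + f x * pd 1 (fun y => (W y).imK) x
        - f x * pd 2 (fun y => (W y).imJ) x
        - (pd 0 f x * (W x).re - pd 1 f x * (W x).imK + pd 2 f x * (W x).imJ) = 0 := by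
    intro x hx
    have h0 := congrArg QuaternionAlgebra.imI (hVek x hx)
    simp [Dq, DfF, Fin.sum_univ_three, Quaternion.re_mul, Quaternion.imI_mul, Quaternion.imJ_mul,
      Quaternion.imK_mul] at h0
    simp [Dq, pdq, qe, DfF, gradq, CH, Fin.sum_univ_three, smul_eq_mul] at h0
    have hinv : f x * (f x)⁻¹ = 1 := mul_inv_cancel₀ (hf0 x hx)
    linear_combination (f x) * h0 + (pd 0 f x * (W x).re - pd 1 f x * (W x).imK
      + pd 2 f x * (W x).imJ) * hinv
  have hJ : ∀ x ∈ Ω,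
      f x * pd 1 (fun y => (W y).re) x + f x * pd 2 (fun y => (W y).imI) x
        - f x * pd 0 (fun y => (W y).imK) x
        - (pd 1 f x * (W x).re - pd 2 f x * (W x).imI + pd 0 f x * (W x).imK) = 0 := by
    intro x hx
    have h0 := congrArg QuaternionAlgebra.imJ (hVek x hx)
    simp [Dq, DfF, Fin.sum_univ_three, Quaternion.re_mul, Quaternion.imI_mul, Quaternion.imJ_mul,
      Quaternion.imK_mul] at h0
    simp [Dq, pdq, qe, DfF, gradq, CH, Fin.sum_univ_three, smul_eq_mul] at h0
    have hinv : f x * (f x)⁻¹ = 1 := mul_inv_cancel₀ (hf0 x hx)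
    linear_combination (f x) * h0 + (pd 1 f x * (W x).re - pd 2 f x * (W x).imI
      + pd 0 f x * (W x).imK) * hinv
  have hK : ∀ x ∈ Ω,
      f x * pd 2 (fun y => (W y).re) x + f x * pd 0 (fun y => (W y).imJ) x
        - f x * pd 1 (fun y => (W y).imI) x
        - (pd 2 f x * (W x).re - pd 0 f x * (W x).imJ + pd 1 f x * (W x).imI) = 0 := by
    intro x hx
    have h0 := congrArg QuaternionAlgebra.imK (hVek x hx)
    simp [Dq, DfF, Fin.sum_univ_three, Quaternion.re_mul, Quaternion.imI_mul, Quaternion.imJ_mul,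
      Quaternion.imK_mul] at h0
    simp [Dq, pdq, qe, DfF, gradq, CH, Fin.sum_univ_three, smul_eq_mul] at h0
    have hinv : f x * (f x)⁻¹ = 1 := mul_inv_cancel₀ (hf0 x hx)
    linear_combination (f x) * h0 + (pd 2 f x * (W x).re - pd 0 f x * (W x).imJ
      + pd 1 f x * (W x).imI) * hinv
  -- smoothness of the products Φ_i = f * w_i
  have hΦ1 : ContDiffOn ℝ 2 (fun y => f y * (W y).imI) Ω := hf.mul hw1
  have hΦ2 : ContDiffOn ℝ 2 (fun y => f y * (W y).imJ) Ω := hf.mul hw2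
  have hΦ3 : ContDiffOn ℝ 2 (fun y => f y * (W y).imK) Ω := hf.mul hw3
  -- the rot components of Φ equal  w₀ ∂ₖ f − f ∂ₖ w₀
  have hA0 : ∀ x ∈ Ω, pd 1 (fun y => f y * (W y).imK) x - pd 2 (fun y => f y * (W y).imJ) x
      = (W x).re * pd 0 f x - f x * pd 0 (fun y => (W y).re) x := by
    intro x hx
    rw [pd_mul (hdf x hx) (hdw3 x hx), pd_mul (hdf x hx) (hdw2 x hx)]
    linear_combination hI x hx
  have hA1 : ∀ x ∈ Ω, pd 2 (fun y => f y * (W y).imI) x - pd 0 (fun y => f y * (W y).imK) x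
      = (W x).re * pd 1 f x - f x * pd 1 (fun y => (W y).re) x := by
    intro x hx
    rw [pd_mul (hdf x hx) (hdw1 x hx), pd_mul (hdf x hx) (hdw3 x hx)]
    linear_combination hJ x hx
  have hA2 : ∀ x ∈ Ω, pd 0 (fun y => f y * (W y).imJ) x - pd 1 (fun y => f y * (W y).imI) x
      = (W x).re * pd 2 f x - f x * pd 2 (fun y => (W y).re) x := by
    intro x hx
    rw [pd_mul (hdf x hx) (hdw2 x hx), pd_mul (hdf x hx) (hdw1 x hx)]
    linear_combination hK x hx
  -- div rot Φ = 0 (telescoping with Schwarz)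
  have hRot : pd 0 (fun x => pd 1 (fun y => f y * (W y).imK) x
                - pd 2 (fun y => f y * (W y).imJ) x) p
      + pd 1 (fun x => pd 2 (fun y => f y * (W y).imI) x
                - pd 0 (fun y => f y * (W y).imK) x) p
      + pd 2 (fun x => pd 0 (fun y => f y * (W y).imJ) x
                - pd 1 (fun y => f y * (W y).imI) x) p = 0 := by
    rw [pd_sub (pd_diffAt hΩ hΦ3 hp 1) (pd_diffAt hΩ hΦ2 hp 2),
        pd_sub (pd_diffAt hΩ hΦ1 hp 2) (pd_diffAt hΩ hΦ3 hp 0),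
        pd_sub (pd_diffAt hΩ hΦ2 hp 0) (pd_diffAt hΩ hΦ1 hp 1)]
    linear_combination pd_comm hΩ hΦ3 hp 0 1 - pd_comm hΩ hΦ2 hp 0 2 + pd_comm hΩ hΦ1 hp 1 2
  -- quotient w₀ / f
  have hw0f : ContDiffOn ℝ 2 (fun y => (W y).re / f y) Ω := by
    have : ContDiffOn ℝ 2 (fun y => (W y).re * (f y)⁻¹) Ω := hw0.mul (hf.inv hf0)
    simpa only [div_eq_mul_inv] using this
  -- ================== part (iii) ==================
  have part3 : divq (fun x => f x • Quaternion.im (W x)) p = 0 := by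
    simp only [divq, Quaternion.imI_smul, Quaternion.imJ_smul, Quaternion.imK_smul,
      Quaternion.imI_im, Quaternion.imJ_im, Quaternion.imK_im, smul_eq_mul]
    rw [pd_mul (hdf p hp) (hdw1 p hp), pd_mul (hdf p hp) (hdw2 p hp),
        pd_mul (hdf p hp) (hdw3 p hp)]
    linear_combination hS p hp
  -- ================== part (ii) ==================
  have hG0eq : ∀ x ∈ Ω, f x ^ 2 * pd 0 (fun y => (W y).re / f y) x
      = -(pd 1 (fun y => f y * (W y).imK) x - pd 2 (fun y => f y * (W y).imJ) x) := by
    intro x hx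
    rw [pd_div (hdw0 x hx) (hdf x hx) (hf0 x hx), hA0 x hx]
    have hfx := hf0 x hx
    field_simp
    ring
  have hG1eq : ∀ x ∈ Ω, f x ^ 2 * pd 1 (fun y => (W y).re / f y) x
      = -(pd 2 (fun y => f y * (W y).imI) x - pd 0 (fun y => f y * (W y).imK) x) := by
    intro x hx
    rw [pd_div (hdw0 x hx) (hdf x hx) (hf0 x hx), hA1 x hx]
    have hfx := hf0 x hx
    field_simp
    ring
  have hG2eq : ∀ x ∈ Ω, f x ^ 2 * pd 2 (fun y => (W y).re / f y) x
      = -(pd 0 (fun y => f y * (W y).imJ) x - pd 1 (fun y => f y * (W y).imI) x) := by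
    intro x hx
    rw [pd_div (hdw0 x hx) (hdf x hx) (hf0 x hx), hA2 x hx]
    have hfx := hf0 x hx
    field_simp
    ring
  have part2 : ∑ k : Fin 3, pd k (fun x => (f x) ^ 2
      * pd k (fun y => (W y).re / f y) x) p = 0 := by
    rw [Fin.sum_univ_three]
    rw [pd_congr hΩ hG0eq hp 0, pd_congr hΩ hG1eq hp 1, pd_congr hΩ hG2eq hp 2]
    rw [pd_neg, pd_neg, pd_neg]
    linear_combination -hRot
  -- ================== part (i) ==================
  have hH0 : pd 0 (fun x => f x * pd 0 (fun y => (W y).re) x - (W x).re * pd 0 f x) p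
      = -(pd 0 (fun x => pd 1 (fun y => f y * (W y).imK) x
            - pd 2 (fun y => f y * (W y).imJ) x) p) := by
    rw [pd_congr hΩ (fun x hx => by linear_combination hA0 x hx :
      ∀ x ∈ Ω, f x * pd 0 (fun y => (W y).re) x - (W x).re * pd 0 f x
        = -(pd 1 (fun y => f y * (W y).imK) x - pd 2 (fun y => f y * (W y).imJ) x)) hp 0,
      pd_neg]
  have hH1 : pd 1 (fun x => f x * pd 1 (fun y => (W y).re) x - (W x).re * pd 1 f x) p
      = -(pd 1 (fun x => pd 2 (fun y => f y * (W y).imI) x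
            - pd 0 (fun y => f y * (W y).imK) x) p) := by
    rw [pd_congr hΩ (fun x hx => by linear_combination hA1 x hx :
      ∀ x ∈ Ω, f x * pd 1 (fun y => (W y).re) x - (W x).re * pd 1 f x
        = -(pd 2 (fun y => f y * (W y).imI) x - pd 0 (fun y => f y * (W y).imK) x)) hp 1,
      pd_neg]
  have hH2 : pd 2 (fun x => f x * pd 2 (fun y => (W y).re) x - (W x).re * pd 2 f x) p
      = -(pd 2 (fun x => pd 0 (fun y => f y * (W y).imJ) x
            - pd 1 (fun y => f y * (W y).imI) x) p) := by
    rw [pd_congr hΩ (fun x hx => by linear_combination hA2 x hx :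
      ∀ x ∈ Ω, f x * pd 2 (fun y => (W y).re) x - (W x).re * pd 2 f x
        = -(pd 0 (fun y => f y * (W y).imJ) x - pd 1 (fun y => f y * (W y).imI) x)) hp 2,
      pd_neg]
  -- expand the left sides of hH's
  have hE0 : pd 0 (fun x => f x * pd 0 (fun y => (W y).re) x - (W x).re * pd 0 f x) p
      = f p * pd 0 (pd 0 (fun y => (W y).re)) p - (W p).re * pd 0 (pd 0 f) p := by
    rw [pd_sub ((hdf p hp).fun_mul (pd_diffAt hΩ hw0 hp 0)) ((hdw0 p hp).fun_mul (pd_diffAt hΩ hf hp 0)),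
        pd_mul (hdf p hp) (pd_diffAt hΩ hw0 hp 0), pd_mul (hdw0 p hp) (pd_diffAt hΩ hf hp 0)]
    ring
  have hE1 : pd 1 (fun x => f x * pd 1 (fun y => (W y).re) x - (W x).re * pd 1 f x) p
      = f p * pd 1 (pd 1 (fun y => (W y).re)) p - (W p).re * pd 1 (pd 1 f) p := by
    rw [pd_sub ((hdf p hp).fun_mul (pd_diffAt hΩ hw0 hp 1)) ((hdw0 p hp).fun_mul (pd_diffAt hΩ hf hp 1)),
        pd_mul (hdf p hp) (pd_diffAt hΩ hw0 hp 1), pd_mul (hdw0 p hp) (pd_diffAt hΩ hf hp 1)]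
    ring
  have hE2 : pd 2 (fun x => f x * pd 2 (fun y => (W y).re) x - (W x).re * pd 2 f x) p
      = f p * pd 2 (pd 2 (fun y => (W y).re)) p - (W p).re * pd 2 (pd 2 f) p := by
    rw [pd_sub ((hdf p hp).fun_mul (pd_diffAt hΩ hw0 hp 2)) ((hdw0 p hp).fun_mul (pd_diffAt hΩ hf hp 2)),
        pd_mul (hdf p hp) (pd_diffAt hΩ hw0 hp 2), pd_mul (hdw0 p hp) (pd_diffAt hΩ hf hp 2)]
    ring
  have part1 : -(lap3 (fun x => (W x).re) p) + (lap3 f p / f p) * (W p).re = 0 := by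
    simp only [lap3, Fin.sum_univ_three]
    have hC : f p * (pd 0 (pd 0 (fun y => (W y).re)) p + pd 1 (pd 1 (fun y => (W y).re)) p
          + pd 2 (pd 2 (fun y => (W y).re)) p)
        - (W p).re * (pd 0 (pd 0 f) p + pd 1 (pd 1 f) p + pd 2 (pd 2 f) p) = 0 := by
      linear_combination (hH0 - hE0) + (hH1 - hE1) + (hH2 - hE2) - hRot
    have hfp := hf0 p hp
    field_simp
    linear_combination -hC
  -- ================== part (iv) ==================
  have hB0 : ∀ x ∈ Ω, ((f x) ^ 2)⁻¹ * (pd 1 (fun y => f y * (W y).imK) x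
        - pd 2 (fun y => f y * (W y).imJ) x)
      = -(pd 0 (fun y => (W y).re / f y) x) := by
    intro x hx
    rw [hA0 x hx, pd_div (hdw0 x hx) (hdf x hx) (hf0 x hx)]
    have := hf0 x hx
    field_simp
    ring
  have hB1 : ∀ x ∈ Ω, ((f x) ^ 2)⁻¹ * (pd 2 (fun y => f y * (W y).imI) x
        - pd 0 (fun y => f y * (W y).imK) x)
      = -(pd 1 (fun y => (W y).re / f y) x) := by
    intro x hx
    rw [hA1 x hx, pd_div (hdw0 x hx) (hdf x hx) (hf0 x hx)]
    have := hf0 x hx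
    field_simp
    ring
  have hB2 : ∀ x ∈ Ω, ((f x) ^ 2)⁻¹ * (pd 0 (fun y => f y * (W y).imJ) x
        - pd 1 (fun y => f y * (W y).imI) x)
      = -(pd 2 (fun y => (W y).re / f y) x) := by
    intro x hx
    rw [hA2 x hx, pd_div (hdw0 x hx) (hdf x hx) (hf0 x hx)]
    have := hf0 x hx
    field_simp
    ring
  have part4 : rotq (fun x => ((f x) ^ 2)⁻¹
      • rotq (fun y => f y • Quaternion.im (W y)) x) p = 0 := by
    simp only [rotq, Quaternion.imI_smul, Quaternion.imJ_smul, Quaternion.imK_smul,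
      Quaternion.imI_im, Quaternion.imJ_im, Quaternion.imK_im, smul_eq_mul]
    refine Quaternion.ext_iff.mpr ?_
    refine ⟨rfl, ?_, ?_, ?_⟩ <;>
      simp only [Quaternion.imI_zero, Quaternion.imJ_zero,
        Quaternion.imK_zero]
    · erw [pd_congr hΩ hB2 hp 1, pd_congr hΩ hB1 hp 2, pd_neg, pd_neg]
      linear_combination -pd_comm hΩ hw0f hp 1 2
    · erw [pd_congr hΩ hB0 hp 2, pd_congr hΩ hB2 hp 0, pd_neg, pd_neg]
      linear_combination -pd_comm hΩ hw0f hp 2 0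
    · erw [pd_congr hΩ hB1 hp 0, pd_congr hΩ hB0 hp 1, pd_neg, pd_neg]
      linear_combination -pd_comm hΩ hw0f hp 0 1
  exact ⟨part1, part2, part3, part4⟩
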